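/- Let (c_m)_{m≥1} be the sequence of real numbers defined by c₁ = 1 and, for m ≥ 2, c_m = [(βm + 1)/((m−1)·(m + 1 − (3/2)βm))]·∑_{ℓ=1}^{m−1} C(m, ℓ)·B(βℓ + 1, β(m−ℓ) + 1)·c_ℓ·c_{m−ℓ}. Then there exists a constant A₁ > 0 such that c_m ≤ A₁^m·m^m for all m ≥ 1. (In particular, the sequence (c_m) satisfies the Carleman condition, so the moment problem with moments (c_m) is determinate.) -/

import Mathlib

open MeasureTheory Real Set

/-- The exponent `β = (√17 - 3)/2`, the positive root of `(β+1)(β+2) = 4`. -/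
noncomputable def β : ℝ := (Real.sqrt 17 - 3) / 2

/-- The Beta function `B(a,b) = ∫₀¹ t^{a-1}(1-t)^{b-1} dt`. -/
noncomputable def Bfun (a b : ℝ) : ℝ := ∫ t in (0:ℝ)..1, t ^ (a - 1) * (1 - t) ^ (b - 1)

lemma beta_gt : (1:ℝ)/2 < β := by
  have h17 : Real.sqrt 17 ^ 2 = 17 := Real.sq_sqrt (by norm_num)
  have h0 : (0:ℝ) ≤ Real.sqrt 17 := Real.sqrt_nonneg 17
  unfold β; nlinarith

lemma beta_lt : β < 3/5 := by
  have h17 : Real.sqrt 17 ^ 2 = 17 := Real.sq_sqrt (by norm_num)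
  have h0 : (0:ℝ) ≤ Real.sqrt 17 := Real.sqrt_nonneg 17
  unfold β; nlinarith

lemma Bfun_cont {a b : ℝ} (ha : 1 ≤ a) (hb : 1 ≤ b) :
    Continuous (fun t : ℝ => t ^ (a - 1) * (1 - t) ^ (b - 1)) := by
  apply Continuous.mul
  · exact Real.continuous_rpow_const (by linarith)
  · exact (Real.continuous_rpow_const (by linarith)).comp (continuous_const.sub continuous_id)

lemma Bfun_nonneg {a b : ℝ} (ha : 1 ≤ a) (hb : 1 ≤ b) : 0 ≤ Bfun a b := by
  apply intervalIntegral.integral_nonneg (by norm_num)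
  intro t ht
  exact mul_nonneg (Real.rpow_nonneg ht.1 _) (Real.rpow_nonneg (by linarith [ht.2]) _)

lemma Bfun_le_one {a b : ℝ} (ha : 1 ≤ a) (hb : 1 ≤ b) : Bfun a b ≤ 1 := by
  have h1 : Bfun a b ≤ ∫ _t in (0:ℝ)..1, (1:ℝ) := by
    apply intervalIntegral.integral_mono_on (by norm_num)
    · exact (Bfun_cont ha hb).intervalIntegrable 0 1
    · exact intervalIntegrable_const
    · intro t ht
      have h1 : t ^ (a-1) ≤ 1 := Real.rpow_le_one ht.1 ht.2 (by linarith)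
      have h2 : (1-t) ^ (b-1) ≤ 1 :=
        Real.rpow_le_one (by linarith [ht.2]) (by linarith [ht.1]) (by linarith)
      nlinarith [Real.rpow_nonneg ht.1 (a-1), Real.rpow_nonneg (show (0:ℝ) ≤ 1 - t by linarith [ht.2]) (b-1)]
  simpa using h1

lemma choose_mul_le (m ℓ : ℕ) (h : ℓ ≤ m) :
    m.choose ℓ * ℓ ^ ℓ * (m - ℓ) ^ (m - ℓ) ≤ m ^ m := by
  have hadd : ℓ + (m - ℓ) = m := Nat.add_sub_cancel' h
  calc m.choose ℓ * ℓ ^ ℓ * (m - ℓ) ^ (m - ℓ)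
      = ℓ ^ ℓ * (m - ℓ) ^ (m - ℓ) * m.choose ℓ := by ring
    _ ≤ ∑ k ∈ Finset.range (m+1), ℓ ^ k * (m - ℓ) ^ (m - k) * m.choose k := by
        apply Finset.single_le_sum (f := fun k => ℓ ^ k * (m - ℓ) ^ (m - k) * m.choose k)
          (fun k _ => Nat.zero_le _)
        simp [Nat.lt_succ_of_le h]
    _ = (ℓ + (m - ℓ)) ^ m := (add_pow ℓ (m - ℓ) m).symm
    _ = m ^ m := by rw [hadd]

lemma sum_inv_sq_le : ∀ n : ℕ, 1 ≤ n → ∑ k ∈ Finset.Icc 1 n, (1:ℝ)/(k:ℝ)^2 ≤ 2 - 1/(n:ℝ) := by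
  intro n hn
  induction n with
  | zero => omega
  | succ n IH =>
    rcases Nat.eq_or_lt_of_le hn with h | h
    · simp [← h]; norm_num
    · have hn1 : 1 ≤ n := by omega
      have hnR : (1:ℝ) ≤ n := by exact_mod_cast hn1
      rw [Finset.sum_Icc_succ_top (by omega : 1 ≤ n + 1)]
      have := IH hn1
      have hstep : (1:ℝ)/((n:ℝ)+1)^2 ≤ 1/(n:ℝ) - 1/((n:ℝ)+1) := by
        rw [div_sub_div _ _ (by positivity) (by positivity)]
        rw [div_le_div_iff₀ (by positivity) (by positivity)]
        ring_nf; nlinarith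
      push_cast
      linarith

lemma sum_inv_sq_Ico (m : ℕ) : ∑ k ∈ Finset.Ico 1 m, (1:ℝ)/(k:ℝ)^2 ≤ 2 := by
  rcases Nat.lt_or_ge m 2 with h | h
  · interval_cases m <;> simp
  · have : Finset.Ico 1 m = Finset.Icc 1 (m-1) := by
      ext k; simp only [Finset.mem_Ico, Finset.mem_Icc]; omega
    rw [this]
    have h1 : 1 ≤ m - 1 := by omega
    have := sum_inv_sq_le (m-1) h1
    have : (0:ℝ) < ((m-1:ℕ):ℝ) := by exact_mod_cast Nat.lt_of_lt_of_le Nat.zero_lt_one h1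
    linarith [sum_inv_sq_le (m-1) h1, one_div_pos.mpr this]

lemma sum_reflect (f : ℕ → ℝ) (m : ℕ) :
    ∑ ℓ ∈ Finset.Ico 1 m, f (m - ℓ) = ∑ ℓ ∈ Finset.Ico 1 m, f ℓ := by
  apply Finset.sum_nbij' (fun ℓ => m - ℓ) (fun ℓ => m - ℓ)
  · intro a ha; simp only [Finset.mem_Ico] at *; omega
  · intro a ha; simp only [Finset.mem_Ico] at *; omega
  · intro a ha; simp only [Finset.mem_Ico] at *; omega
  · intro a ha; simp only [Finset.mem_Ico] at *; omega
  · intro a _; rfl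

set_option maxHeartbeats 2000000 in
/-- If `(c_m)` satisfies `c₁ = 1` and, for `m ≥ 2`,
`c_m = (βm+1)/((m-1)(m+1-(3/2)βm)) ∑_{ℓ=1}^{m-1} C(m,ℓ) B(βℓ+1, β(m-ℓ)+1) c_ℓ c_{m-ℓ}`,
then there is `A₁ > 0` with `c_m ≤ A₁^m m^m` for all `m ≥ 1`
(so the Carleman condition holds and the moment problem is determinate). -/
theorem moment_sequence_growth_bound (c : ℕ → ℝ) (hc1 : c 1 = 1)
    (hrec : ∀ m : ℕ, 2 ≤ m →
      c m = ((β * m + 1) / (((m : ℝ) - 1) * ((m : ℝ) + 1 - (3 / 2) * β * m))) *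
        ∑ ℓ ∈ Finset.Ico 1 m,
          (m.choose ℓ : ℝ) * Bfun (β * ℓ + 1) (β * ((m - ℓ : ℕ) : ℝ) + 1) *
            c ℓ * c (m - ℓ)) :
    ∃ A₁ : ℝ, 0 < A₁ ∧ ∀ m : ℕ, 1 ≤ m → c m ≤ A₁ ^ m * (m : ℝ) ^ m := by
  have hb1 := beta_gt
  have hb2 := beta_lt
  -- strong induction bound
  have key : ∀ m : ℕ, 1 ≤ m →
      0 ≤ c m ∧ c m ≤ 16 ^ m * (m:ℝ) ^ m / (16 * (m:ℝ)^2) := by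
    intro m
    induction m using Nat.strong_induction_on with
    | _ m IH =>
      intro hm
      rcases Nat.lt_or_ge m 2 with h2 | h2
      · interval_cases m
        · norm_num [hc1]
      · -- m ≥ 2
        have hmR : (2:ℝ) ≤ (m:ℝ) := by exact_mod_cast h2
        have hbm : β * (m:ℝ) ≤ 3/5 * (m:ℝ) :=
          mul_le_mul_of_nonneg_right hb2.le (by linarith)
        have hbm' : (1:ℝ)/2 * (m:ℝ) ≤ β * (m:ℝ) :=
          mul_le_mul_of_nonneg_right hb1.le (by linarith)
        have hden : 0 < ((m : ℝ) - 1) * ((m : ℝ) + 1 - (3 / 2) * β * m) := by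
          apply mul_pos (by linarith)
          nlinarith
        have hP0 : 0 ≤ (β * m + 1) / (((m : ℝ) - 1) * ((m : ℝ) + 1 - (3 / 2) * β * m)) := by
          apply div_nonneg (by nlinarith) hden.le
        have hP2 : (β * m + 1) / (((m : ℝ) - 1) * ((m : ℝ) + 1 - (3 / 2) * β * m)) ≤ 2 := by
          rw [div_le_iff₀ hden]; nlinarith [sq_nonneg ((m:ℝ) - 2), mul_nonneg (show (0:ℝ) ≤ (m:ℝ)-1 by linarith) (show (0:ℝ) ≤ 3/5*(m:ℝ) - β*(m:ℝ) by linarith)]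
        -- facts per term
        have hterm_nonneg : ∀ ℓ ∈ Finset.Ico 1 m,
            (0:ℝ) ≤ (m.choose ℓ : ℝ) * Bfun (β * ℓ + 1) (β * ((m - ℓ : ℕ) : ℝ) + 1) *
              c ℓ * c (m - ℓ) := by
          intro ℓ hℓ
          simp only [Finset.mem_Ico] at hℓ
          have hc_ℓ := (IH ℓ hℓ.2 hℓ.1).1
          have hc_j := (IH (m - ℓ) (by omega) (by omega)).1
          have hB : 0 ≤ Bfun (β * ℓ + 1) (β * ((m - ℓ : ℕ) : ℝ) + 1) := by
            apply Bfun_nonneg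
            · have : (1:ℝ) ≤ (ℓ:ℝ) := by exact_mod_cast hℓ.1
              nlinarith
            · have : (1:ℝ) ≤ ((m - ℓ : ℕ):ℝ) := by exact_mod_cast (by omega : 1 ≤ m - ℓ)
              nlinarith
          positivity
        have hsum_nonneg : (0:ℝ) ≤ ∑ ℓ ∈ Finset.Ico 1 m,
            (m.choose ℓ : ℝ) * Bfun (β * ℓ + 1) (β * ((m - ℓ : ℕ) : ℝ) + 1) *
              c ℓ * c (m - ℓ) := Finset.sum_nonneg hterm_nonneg
        constructor
        · rw [hrec m h2]; exact mul_nonneg hP0 hsum_nonneg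
        · rw [hrec m h2]
          -- bound the sum termwise
          have hsum_le : (∑ ℓ ∈ Finset.Ico 1 m,
              (m.choose ℓ : ℝ) * Bfun (β * ℓ + 1) (β * ((m - ℓ : ℕ) : ℝ) + 1) *
                c ℓ * c (m - ℓ))
              ≤ ∑ ℓ ∈ Finset.Ico 1 m,
                (16 ^ m * (m:ℝ) ^ m / (128 * (m:ℝ)^2)) * (1/(ℓ:ℝ)^2 + 1/(((m-ℓ:ℕ)):ℝ)^2) := by
            apply Finset.sum_le_sum
            intro ℓ hℓ
            simp only [Finset.mem_Ico] at hℓ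
            set j := m - ℓ with hj
            have hj1 : 1 ≤ j := by omega
            have hjm : j < m := by omega
            have hℓj : ℓ + j = m := by omega
            have hcℓ := IH ℓ hℓ.2 hℓ.1
            have hcj := IH j hjm hj1
            have hℓR : (1:ℝ) ≤ (ℓ:ℝ) := by exact_mod_cast hℓ.1
            have hjR : (1:ℝ) ≤ (j:ℝ) := by exact_mod_cast hj1
            have hB0 : 0 ≤ Bfun (β * ℓ + 1) (β * ((j : ℕ) : ℝ) + 1) :=
              Bfun_nonneg (by nlinarith) (by nlinarith)
            have hB1 : Bfun (β * ℓ + 1) (β * ((j : ℕ) : ℝ) + 1) ≤ 1 :=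
              Bfun_le_one (by nlinarith) (by nlinarith)
            have hchoose : ((m.choose ℓ : ℕ):ℝ) * (ℓ:ℝ)^ℓ * (j:ℝ)^j ≤ (m:ℝ)^m := by
              have := choose_mul_le m ℓ hℓ.2.le
              rw [← hj] at this
              exact_mod_cast this
            -- step 1: bound by products of bounds
            have step1 : (m.choose ℓ : ℝ) * Bfun (β * ℓ + 1) (β * ((j : ℕ) : ℝ) + 1) *
                c ℓ * c j ≤ (m.choose ℓ : ℝ) * 1 *
                (16 ^ ℓ * (ℓ:ℝ) ^ ℓ / (16 * (ℓ:ℝ)^2)) * (16 ^ j * (j:ℝ) ^ j / (16 * (j:ℝ)^2)) := by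
              have h1 : 0 ≤ (m.choose ℓ : ℝ) := Nat.cast_nonneg _
              have h2 : 0 ≤ 16 ^ ℓ * (ℓ:ℝ) ^ ℓ / (16 * (ℓ:ℝ)^2) := by positivity
              gcongr <;> first
              | exact hcℓ.1 | exact hcj.1 | exact hcℓ.2 | exact hcj.2
              | exact hB1 | exact hB0 | positivity
            refine step1.trans ?_
            -- step 2: algebraic
            have hkey : (1:ℝ)/((ℓ:ℝ)^2 * (j:ℝ)^2) ≤ (2/(m:ℝ)^2) * (1/(ℓ:ℝ)^2 + 1/(j:ℝ)^2) := by
              have hm' : (m:ℝ) = (ℓ:ℝ) + (j:ℝ) := by exact_mod_cast hℓj.symm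
              rw [hm']
              have hℓ0 : (0:ℝ) < (ℓ:ℝ) := by linarith
              have hj0 : (0:ℝ) < (j:ℝ) := by linarith
              rw [div_le_iff₀ (by positivity)]
              have e1 : (2/((ℓ:ℝ)+(j:ℝ))^2) * (1/(ℓ:ℝ)^2 + 1/(j:ℝ)^2) * ((ℓ:ℝ)^2 * (j:ℝ)^2)
                  = 2 * ((j:ℝ)^2 + (ℓ:ℝ)^2) / ((ℓ:ℝ)+(j:ℝ))^2 := by
                field_simp
              rw [e1, le_div_iff₀ (by positivity)]
              nlinarith [sq_nonneg ((ℓ:ℝ) - (j:ℝ))]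
            have e2 : (m.choose ℓ : ℝ) * 1 *
                (16 ^ ℓ * (ℓ:ℝ) ^ ℓ / (16 * (ℓ:ℝ)^2)) * (16 ^ j * (j:ℝ) ^ j / (16 * (j:ℝ)^2))
                = (16:ℝ) ^ m / 256 * ((m.choose ℓ : ℝ) * (ℓ:ℝ)^ℓ * (j:ℝ)^j) * (1/((ℓ:ℝ)^2 * (j:ℝ)^2)) := by
              rw [← hℓj, pow_add]
              field_simp; ring
            rw [e2]
            have hmono : (16:ℝ) ^ m / 256 * ((m.choose ℓ : ℝ) * (ℓ:ℝ)^ℓ * (j:ℝ)^j) * (1/((ℓ:ℝ)^2 * (j:ℝ)^2))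
                ≤ (16:ℝ) ^ m / 256 * (m:ℝ)^m * ((2/(m:ℝ)^2) * (1/(ℓ:ℝ)^2 + 1/(j:ℝ)^2)) := by
              have h16 : (0:ℝ) ≤ (16:ℝ)^m / 256 := by positivity
              calc (16:ℝ) ^ m / 256 * ((m.choose ℓ : ℝ) * (ℓ:ℝ)^ℓ * (j:ℝ)^j) * (1/((ℓ:ℝ)^2 * (j:ℝ)^2))
                  ≤ (16:ℝ) ^ m / 256 * (m:ℝ)^m * (1/((ℓ:ℝ)^2 * (j:ℝ)^2)) := by
                    gcongr
                    all_goals exact hchoose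
                _ ≤ (16:ℝ) ^ m / 256 * (m:ℝ)^m * ((2/(m:ℝ)^2) * (1/(ℓ:ℝ)^2 + 1/(j:ℝ)^2)) := by
                    gcongr
                    all_goals exact hkey
            refine hmono.trans (le_of_eq ?_)
            field_simp
            ring
          -- now bound the total
          have hsum2 : ∑ ℓ ∈ Finset.Ico 1 m,
                (16 ^ m * (m:ℝ) ^ m / (128 * (m:ℝ)^2)) * (1/(ℓ:ℝ)^2 + 1/(((m-ℓ:ℕ)):ℝ)^2)
              ≤ 16 ^ m * (m:ℝ) ^ m / (32 * (m:ℝ)^2) := by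
            rw [← Finset.mul_sum]
            have hsplit : ∑ ℓ ∈ Finset.Ico 1 m, (1/(ℓ:ℝ)^2 + 1/(((m-ℓ:ℕ)):ℝ)^2)
                = (∑ ℓ ∈ Finset.Ico 1 m, 1/(ℓ:ℝ)^2) + ∑ ℓ ∈ Finset.Ico 1 m, 1/(((m-ℓ:ℕ)):ℝ)^2 :=
              Finset.sum_add_distrib
            have hrefl : ∑ ℓ ∈ Finset.Ico 1 m, (1:ℝ)/(((m-ℓ:ℕ)):ℝ)^2
                = ∑ ℓ ∈ Finset.Ico 1 m, (1:ℝ)/(ℓ:ℝ)^2 := sum_reflect (fun k => 1/(k:ℝ)^2) m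
            have hbound := sum_inv_sq_Ico m
            have h4 : ∑ ℓ ∈ Finset.Ico 1 m, (1/(ℓ:ℝ)^2 + 1/(((m-ℓ:ℕ)):ℝ)^2) ≤ 4 := by
              rw [hsplit, hrefl]; linarith
            have hc0 : (0:ℝ) ≤ 16 ^ m * (m:ℝ) ^ m / (128 * (m:ℝ)^2) := by positivity
            calc 16 ^ m * (m:ℝ) ^ m / (128 * (m:ℝ)^2) *
                  ∑ ℓ ∈ Finset.Ico 1 m, (1/(ℓ:ℝ)^2 + 1/(((m-ℓ:ℕ)):ℝ)^2)
                ≤ 16 ^ m * (m:ℝ) ^ m / (128 * (m:ℝ)^2) * 4 := by gcongr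
              _ = 16 ^ m * (m:ℝ) ^ m / (32 * (m:ℝ)^2) := by ring
          have hS := hsum_le.trans hsum2
          calc ((β * m + 1) / (((m : ℝ) - 1) * ((m : ℝ) + 1 - (3 / 2) * β * m))) *
                ∑ ℓ ∈ Finset.Ico 1 m,
                  (m.choose ℓ : ℝ) * Bfun (β * ℓ + 1) (β * ((m - ℓ : ℕ) : ℝ) + 1) *
                    c ℓ * c (m - ℓ)
              ≤ 2 * (16 ^ m * (m:ℝ) ^ m / (32 * (m:ℝ)^2)) := by
                apply mul_le_mul hP2 hS hsum_nonneg (by norm_num)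
            _ = 16 ^ m * (m:ℝ) ^ m / (16 * (m:ℝ)^2) := by ring
  refine ⟨16, by norm_num, fun m hm => ?_⟩
  have hk := (key m hm).2
  have hmR : (1:ℝ) ≤ (m:ℝ) := by exact_mod_cast hm
  have h1 : 16 ^ m * (m:ℝ) ^ m / (16 * (m:ℝ)^2) ≤ 16 ^ m * (m:ℝ) ^ m := by
    apply div_le_self (by positivity)
    nlinarith
  linarith
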